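/- For an irreducible root system, if l' is not divisible by D (D prime, D ∈ {2,3}), then l'čΛ_r ∩ Λ_r = l'Λ_r, where čΛ_r is the coroot lattice and Λ_r the root lattice; whereas if D | l', then l'čΛ_r ⊆ Λ_r. -/

import Mathlib

open scoped RealInnerProductSpace Pointwise

/-- The reflection in the hyperplane orthogonal to `α`. -/
noncomputable def rootReflection {E : Type*} [NormedAddCommGroup E]
    [InnerProductSpace ℝ E] (α : E) (x : E) : E :=
  x - (2 * ⟪x, α⟫ / ⟪α, α⟫) • α

/-- for an irreducible root system with long/short squared-length
ratio `D` (prime, `D ∈ {2,3}`): if `D ∤ l'` then `l'čΛ_r ∩ Λ_r = l'Λ_r`, where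
`čΛ_r` is the coroot lattice and `Λ_r` the root lattice; whereas if `D ∣ l'` then
`l'čΛ_r ⊆ Λ_r`. -/
theorem coroot_lattice_intersection
    {E : Type*} [NormedAddCommGroup E] [InnerProductSpace ℝ E]
    (Φ : Finset E)
    (h0 : (0 : E) ∉ Φ)
    (hrefl : ∀ α ∈ Φ, ∀ β ∈ Φ, rootReflection α β ∈ Φ)
    (hint : ∀ α ∈ Φ, ∀ β ∈ Φ, ∃ n : ℤ, 2 * ⟪β, α⟫ / ⟪α, α⟫ = (n : ℝ))
    (hred : ∀ α ∈ Φ, ∀ c : ℝ, c • α ∈ Φ → c = 1 ∨ c = -1)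
    (hirr : ¬ ∃ Φ₁ Φ₂ : Set E, Φ₁.Nonempty ∧ Φ₂.Nonempty ∧ Φ₁ ∪ Φ₂ = ↑Φ ∧
      Disjoint Φ₁ Φ₂ ∧ ∀ α ∈ Φ₁, ∀ β ∈ Φ₂, ⟪α, β⟫ = 0)
    (D : ℕ) (hD : Nat.Prime D) (hD23 : D = 2 ∨ D = 3)
    (hlen : ∀ β ∈ Φ, ⟪β, β⟫ = 2 ∨ ⟪β, β⟫ = 2 * D)
    (Λr coΛr : AddSubgroup E)
    (hΛr : Λr = AddSubgroup.closure (↑Φ : Set E))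
    (hcoΛr : coΛr = AddSubgroup.closure {x : E | ∃ β ∈ Φ, x = (2 / ⟪β, β⟫) • β})
    (l' : ℕ) (hl' : 0 < l') :
    (¬ (D ∣ l') → ((l' : ℤ) • coΛr) ⊓ Λr = (l' : ℤ) • Λr) ∧
    ((D ∣ l') → ((l' : ℤ) • coΛr) ≤ Λr) := by
  have hD0 : (D : ℝ) ≠ 0 := Nat.cast_ne_zero.mpr hD.pos.ne'
  -- Λr ≤ coΛr
  have hA : Λr ≤ coΛr := by
    rw [hΛr, hcoΛr, AddSubgroup.closure_le]
    intro β hβ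
    have hcβ : (2 / ⟪β, β⟫ : ℝ) • β ∈
        AddSubgroup.closure {x : E | ∃ β ∈ Φ, x = (2 / ⟪β, β⟫) • β} :=
      AddSubgroup.subset_closure ⟨β, hβ, rfl⟩
    rcases hlen β hβ with h2 | h2D
    · have : (2 / ⟪β, β⟫ : ℝ) • β = β := by rw [h2]; norm_num
      rw [this] at hcβ; exact hcβ
    · have : β = (D : ℤ) • ((2 / ⟪β, β⟫ : ℝ) • β) := by
        rw [h2D]
        rw [← Int.cast_smul_eq_zsmul ℝ, smul_smul]
        push_cast
        rw [show (D : ℝ) * (2 / (2 * D)) = 1 by field_simp]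
        rw [one_smul]
      rw [this]
      exact AddSubgroup.zsmul_mem _ hcβ _
  -- D • coΛr ≤ Λr
  have hB : ∀ x ∈ coΛr, (D : ℤ) • x ∈ Λr := by
    rw [hcoΛr]
    intro x hx
    induction hx using AddSubgroup.closure_induction with
    | mem x hx =>
      obtain ⟨β, hβ, rfl⟩ := hx
      rcases hlen β hβ with h2 | h2D
      · have : (2 / ⟪β, β⟫ : ℝ) • β = β := by rw [h2]; norm_num
        rw [this, hΛr]
        exact AddSubgroup.zsmul_mem _ (AddSubgroup.subset_closure hβ) _
      · have : (D : ℤ) • ((2 / ⟪β, β⟫ : ℝ) • β) = β := by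
          rw [h2D, ← Int.cast_smul_eq_zsmul ℝ, smul_smul]
          push_cast
          rw [show (D : ℝ) * (2 / (2 * D)) = 1 by field_simp]
          rw [one_smul]
        rw [this, hΛr]
        exact AddSubgroup.subset_closure hβ
    | zero => simpa using Λr.zero_mem
    | add x y hx hy ihx ihy => rw [smul_add]; exact Λr.add_mem ihx ihy
    | neg x hx ihx => rw [smul_neg]; exact Λr.neg_mem ihx
  constructor
  · intro hnd
    ext x
    simp only [AddSubgroup.mem_inf]
    constructor
    · rintro ⟨hx1, hx2⟩
      rw [AddSubgroup.mem_smul_pointwise_iff_exists] at hx1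
      obtain ⟨y, hy, hyx⟩ := hx1
      have hco : IsCoprime (D : ℤ) (l' : ℤ) :=
        Int.isCoprime_iff_gcd_eq_one.mpr (by
          simpa [Int.gcd_natCast_natCast] using
            (Nat.Prime.coprime_iff_not_dvd hD).mpr hnd)
      obtain ⟨a, b, hab⟩ := hco
      have hyΛ : y ∈ Λr := by
        have : y = a • ((D : ℤ) • y) + b • ((l' : ℤ) • y) := by
          rw [smul_smul, smul_smul, ← add_smul, hab, one_smul]
        rw [this]
        refine Λr.add_mem (Λr.zsmul_mem (hB y hy) a) (Λr.zsmul_mem ?_ b)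
        rw [hyx]; exact hx2
      rw [AddSubgroup.mem_smul_pointwise_iff_exists]
      exact ⟨y, hyΛ, hyx⟩
    · intro hx
      rw [AddSubgroup.mem_smul_pointwise_iff_exists] at hx
      obtain ⟨y, hy, hyx⟩ := hx
      refine ⟨?_, ?_⟩
      · rw [AddSubgroup.mem_smul_pointwise_iff_exists]
        exact ⟨y, hA hy, hyx⟩
      · rw [← hyx]; exact Λr.zsmul_mem hy _
  · rintro ⟨m, rfl⟩
    intro x hx
    rw [AddSubgroup.mem_smul_pointwise_iff_exists] at hx
    obtain ⟨y, hy, hyx⟩ := hx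
    have : ((D * m : ℕ) : ℤ) • y = (m : ℤ) • ((D : ℤ) • y) := by
      rw [smul_smul]; push_cast; ring_nf
    rw [← hyx, this]
    exact Λr.zsmul_mem (hB y hy) _
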